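/- arXiv:1508.03076 — 4 statements merged into one kernel-verified Lean document; each statement's English description precedes it below -/
import Mathlib

section
/- Let 0 < s < 1/2. Define for (ξ₁,ξ₂,ξ₃,ξ₄) ∈ ℤ⁴ with ξ₁+ξ₂+ξ₃+ξ₄ = 0 and (ξ₁+ξ₄)(ξ₃+ξ₄) ≠ 0 the multiplier M₄(ξ̄) = (ξ₁⟨ξ₃⟩^{2s} + ξ₂⟨ξ₄⟩^{2s} + ξ₃⟨ξ₁⟩^{2s} + ξ₄⟨ξ₂⟩^{2s}) / ((ξ₁+ξ₄)(ξ₃+ξ₄)). Let N₍₁₎ denote the largest of |ξ₁|,...,|ξ₄|. If N₍₁₎ ≤ C·min{|ξ₁+ξ₄|, |ξ₃+ξ₄|} for some constant C, then |M₄(ξ̄)| ≤ C'·⟨N₍₁₎⟩^{2s-1}, where C' depends only on s and C. -/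
open Real

/-- Japanese bracket ⟨x⟩ = (1+x²)^{1/2}. -/
noncomputable def jb (x : ℝ) : ℝ := Real.sqrt (1 + x ^ 2)

/-- The multiplier M₄(ξ̄) with weight ⟨ξ⟩^{2s} = (1+ξ²)^s. -/
noncomputable def M4 (s : ℝ) (ξ₁ ξ₂ ξ₃ ξ₄ : ℤ) : ℝ :=
  ((ξ₁ : ℝ) * (1 + (ξ₃ : ℝ) ^ 2) ^ s + (ξ₂ : ℝ) * (1 + (ξ₄ : ℝ) ^ 2) ^ s
      + (ξ₃ : ℝ) * (1 + (ξ₁ : ℝ) ^ 2) ^ s + (ξ₄ : ℝ) * (1 + (ξ₂ : ℝ) ^ 2) ^ s)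
    / (((ξ₁ : ℝ) + ξ₄) * ((ξ₃ : ℝ) + ξ₄))

/-- Case (i), first subcase, of the pointwise multiplier estimate for M₄:
if the largest frequency is dominated by both |ξ₁+ξ₄| and |ξ₃+ξ₄|, then
|M₄| ≲ ⟨N₍₁₎⟩^{2s-1}. -/
theorem stmt_4 (s : ℝ) (hs0 : 0 < s) (hs : s < 1 / 2) (C : ℝ) (hC : 0 < C) :
    ∃ C' : ℝ, 0 < C' ∧ ∀ ξ₁ ξ₂ ξ₃ ξ₄ : ℤ,
      ξ₁ + ξ₂ + ξ₃ + ξ₄ = 0 → ((ξ₁ : ℝ) + ξ₄) * ((ξ₃ : ℝ) + ξ₄) ≠ 0 →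
      max (max |(ξ₁ : ℝ)| |(ξ₂ : ℝ)|) (max |(ξ₃ : ℝ)| |(ξ₄ : ℝ)|)
          ≤ C * min |(ξ₁ : ℝ) + ξ₄| |(ξ₃ : ℝ) + ξ₄| →
      |M4 s ξ₁ ξ₂ ξ₃ ξ₄|
        ≤ C' * jb (max (max |(ξ₁ : ℝ)| |(ξ₂ : ℝ)|) (max |(ξ₃ : ℝ)| |(ξ₄ : ℝ)|))
              ^ (2 * s - 1) := by
  refine ⟨8 * C ^ 2, by positivity, ?_⟩
  intro ξ₁ ξ₂ ξ₃ ξ₄ hsum hne hN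
  set N : ℝ := max (max |(ξ₁ : ℝ)| |(ξ₂ : ℝ)|) (max |(ξ₃ : ℝ)| |(ξ₄ : ℝ)|) with hNdef
  have h1 : |(ξ₁ : ℝ)| ≤ N := le_trans (le_max_left _ _) (le_max_left _ _)
  have h2 : |(ξ₂ : ℝ)| ≤ N := le_trans (le_max_right _ _) (le_max_left _ _)
  have h3 : |(ξ₃ : ℝ)| ≤ N := le_trans (le_max_left _ _) (le_max_right _ _)
  have h4 : |(ξ₄ : ℝ)| ≤ N := le_trans (le_max_right _ _) (le_max_right _ _)
  -- N ≥ 1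
  have hNge1 : 1 ≤ N := by
    by_contra h
    push_neg at h
    have z : ∀ ξ : ℤ, |(ξ : ℝ)| ≤ N → ξ = 0 := by
      intro ξ hξ
      have : ((|ξ| : ℤ) : ℝ) < 1 := by rw [Int.cast_abs]; linarith
      have h' : |ξ| < 1 := by exact_mod_cast this
      have := abs_lt.mp h'
      omega
    apply hne
    rw [z ξ₁ h1, z ξ₄ h4]
    simp
  have hNpos : 0 < N := lt_of_lt_of_le one_pos hNge1
  -- denominator bounds
  have hNa : N ≤ C * |(ξ₁ : ℝ) + ξ₄| :=
    hN.trans (mul_le_mul_of_nonneg_left (min_le_left _ _) hC.le)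
  have hNb : N ≤ C * |(ξ₃ : ℝ) + ξ₄| :=
    hN.trans (mul_le_mul_of_nonneg_left (min_le_right _ _) hC.le)
  have ha0 : 0 < |(ξ₁ : ℝ) + ξ₄| := by nlinarith
  have hb0 : 0 < |(ξ₃ : ℝ) + ξ₄| := by nlinarith
  -- numerator: each term bounded
  have hbase : (0 : ℝ) < 1 + N ^ 2 := by positivity
  have key : ∀ x y : ℝ, |x| ≤ N → |y| ≤ N →
      |x * (1 + y ^ 2) ^ s| ≤ N * (1 + N ^ 2) ^ s := by
    intro x y hx hy
    rw [abs_mul, abs_of_nonneg (Real.rpow_nonneg (by positivity) s)]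
    have hyy : 1 + y ^ 2 ≤ 1 + N ^ 2 := by nlinarith [sq_abs y, abs_nonneg y]
    exact mul_le_mul hx (Real.rpow_le_rpow (by positivity) hyy hs0.le)
      (Real.rpow_nonneg (by positivity) s) hNpos.le
  set P : ℝ := (1 + N ^ 2) ^ s with hPdef
  have hnum : |(ξ₁ : ℝ) * (1 + (ξ₃ : ℝ) ^ 2) ^ s + (ξ₂ : ℝ) * (1 + (ξ₄ : ℝ) ^ 2) ^ s
      + (ξ₃ : ℝ) * (1 + (ξ₁ : ℝ) ^ 2) ^ s + (ξ₄ : ℝ) * (1 + (ξ₂ : ℝ) ^ 2) ^ s|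
      ≤ 4 * N * P := by
    have k1 := key _ _ h1 h3
    have k2 := key _ _ h2 h4
    have k3 := key _ _ h3 h1
    have k4 := key _ _ h4 h2
    calc |(ξ₁ : ℝ) * (1 + (ξ₃ : ℝ) ^ 2) ^ s + (ξ₂ : ℝ) * (1 + (ξ₄ : ℝ) ^ 2) ^ s
          + (ξ₃ : ℝ) * (1 + (ξ₁ : ℝ) ^ 2) ^ s + (ξ₄ : ℝ) * (1 + (ξ₂ : ℝ) ^ 2) ^ s|
        ≤ |(ξ₁ : ℝ) * (1 + (ξ₃ : ℝ) ^ 2) ^ s + (ξ₂ : ℝ) * (1 + (ξ₄ : ℝ) ^ 2) ^ s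
          + (ξ₃ : ℝ) * (1 + (ξ₁ : ℝ) ^ 2) ^ s| + |(ξ₄ : ℝ) * (1 + (ξ₂ : ℝ) ^ 2) ^ s| :=
          abs_add_le _ _
      _ ≤ |(ξ₁ : ℝ) * (1 + (ξ₃ : ℝ) ^ 2) ^ s + (ξ₂ : ℝ) * (1 + (ξ₄ : ℝ) ^ 2) ^ s|
          + |(ξ₃ : ℝ) * (1 + (ξ₁ : ℝ) ^ 2) ^ s| + |(ξ₄ : ℝ) * (1 + (ξ₂ : ℝ) ^ 2) ^ s| := by
          linarith [abs_add_le ((ξ₁ : ℝ) * (1 + (ξ₃ : ℝ) ^ 2) ^ s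
            + (ξ₂ : ℝ) * (1 + (ξ₄ : ℝ) ^ 2) ^ s) ((ξ₃ : ℝ) * (1 + (ξ₁ : ℝ) ^ 2) ^ s)]
      _ ≤ |(ξ₁ : ℝ) * (1 + (ξ₃ : ℝ) ^ 2) ^ s| + |(ξ₂ : ℝ) * (1 + (ξ₄ : ℝ) ^ 2) ^ s|
          + |(ξ₃ : ℝ) * (1 + (ξ₁ : ℝ) ^ 2) ^ s| + |(ξ₄ : ℝ) * (1 + (ξ₂ : ℝ) ^ 2) ^ s| := by
          linarith [abs_add_le ((ξ₁ : ℝ) * (1 + (ξ₃ : ℝ) ^ 2) ^ s)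
            ((ξ₂ : ℝ) * (1 + (ξ₄ : ℝ) ^ 2) ^ s)]
      _ ≤ 4 * N * P := by linarith
  -- jb facts
  have hJpos : 0 < jb N := Real.sqrt_pos.mpr hbase
  have hJ'pos : 0 < jb N ^ (2 * s - 1) := Real.rpow_pos_of_pos hJpos _
  have hP : jb N ^ (2 * s - 1) * jb N = P := by
    have e1 : jb N ^ (2 * s - 1) * jb N = jb N ^ (2 * s) := by
      nth_rewrite 2 [← Real.rpow_one (jb N)]
      rw [← Real.rpow_add hJpos]
      ring_nf
    rw [e1, hPdef, jb, Real.sqrt_eq_rpow, ← Real.rpow_mul hbase.le]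
    congr 1
    ring
  have hjble : jb N ≤ 2 * N := by
    rw [jb]
    have h' : Real.sqrt (1 + N ^ 2) ≤ Real.sqrt ((2 * N) ^ 2) :=
      Real.sqrt_le_sqrt (by nlinarith)
    rwa [Real.sqrt_sq (by linarith)] at h'
  -- assemble
  rw [M4, abs_div, abs_mul, div_le_iff₀ (by positivity)]
  have hab' : N * N ≤ (C * |(ξ₁ : ℝ) + ξ₄|) * (C * |(ξ₃ : ℝ) + ξ₄|) :=
    mul_le_mul hNa hNb hNpos.le (by positivity)
  calc |(ξ₁ : ℝ) * (1 + (ξ₃ : ℝ) ^ 2) ^ s + (ξ₂ : ℝ) * (1 + (ξ₄ : ℝ) ^ 2) ^ s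
        + (ξ₃ : ℝ) * (1 + (ξ₁ : ℝ) ^ 2) ^ s + (ξ₄ : ℝ) * (1 + (ξ₂ : ℝ) ^ 2) ^ s|
      ≤ 4 * N * P := hnum
    _ = 4 * N * (jb N ^ (2 * s - 1) * jb N) := by rw [hP]
    _ ≤ 4 * N * (jb N ^ (2 * s - 1) * (2 * N)) := by
        apply mul_le_mul_of_nonneg_left
          (mul_le_mul_of_nonneg_left hjble hJ'pos.le) (by linarith)
    _ = 8 * (jb N ^ (2 * s - 1)) * (N * N) := by ring
    _ ≤ 8 * (jb N ^ (2 * s - 1)) * ((C * |(ξ₁ : ℝ) + ξ₄|) * (C * |(ξ₃ : ℝ) + ξ₄|)) := by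
        apply mul_le_mul_of_nonneg_left hab' (by positivity)
    _ = 8 * C ^ 2 * jb N ^ (2 * s - 1) * (|(ξ₁ : ℝ) + ξ₄| * |(ξ₃ : ℝ) + ξ₄|) := by ring
end

section
/- Let 0 < s < 1/2 and let M₄ be as above on the hyperplane ξ₁+ξ₂+ξ₃+ξ₄ = 0 with (ξ₁+ξ₄)(ξ₃+ξ₄) ≠ 0. Let N₍₁₎ ≥ N₍₂₎ ≥ N₍₃₎ ≥ N₍₄₎ denote the decreasing rearrangement of |ξ₁|,|ξ₂|,|ξ₃|,|ξ₄|. If N₍₁₎ ≥ c⁻¹·max{|ξ₁+ξ₄|,|ξ₃+ξ₄|} for a sufficiently large constant c⁻¹ (i.e. N₍₁₎ ≫ max{|ξ₁+ξ₄|,|ξ₃+ξ₄|}), then |M₄(ξ̄)| ≤ C·⟨N₍₁₎⟩^{2s-1}, with C depending only on s. -/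
open Real

/-! ### Auxiliary machinery: the weight `gW`, its derivatives, and bounds -/

noncomputable def gW (s x : ℝ) : ℝ := (1 + x ^ 2) ^ s
noncomputable def gW1 (s x : ℝ) : ℝ := 2 * x * s * (1 + x ^ 2) ^ (s - 1)
noncomputable def gW2 (s x : ℝ) : ℝ :=
  2 * s * (1 + x ^ 2) ^ (s - 1) + 2 * x * s * (2 * x * (s - 1) * (1 + x ^ 2) ^ (s - 2))

lemma onepos (x : ℝ) : (0:ℝ) < 1 + x ^ 2 := by positivity

lemma gW_even (s x : ℝ) : gW s (-x) = gW s x := by simp [gW]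

lemma gW1_odd (s x : ℝ) : gW1 s (-x) = -gW1 s x := by
  simp only [gW1, neg_sq]; ring

lemma hasDerivAt_gW (s x : ℝ) : HasDerivAt (gW s) (gW1 s x) x := by
  have h1 : HasDerivAt (fun x : ℝ => 1 + x ^ 2) (2 * x) x := by
    simpa using (hasDerivAt_pow 2 x).const_add 1
  have := h1.rpow_const (p := s) (Or.inl (onepos x).ne')
  rw [show gW s = fun y => (1 + y ^ 2) ^ s from rfl]
  simpa [gW, gW1, mul_comm, mul_assoc, mul_left_comm] using this

lemma hasDerivAt_gW1 (s x : ℝ) : HasDerivAt (gW1 s) (gW2 s x) x := by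
  have h1 : HasDerivAt (fun x : ℝ => 1 + x ^ 2) (2 * x) x := by
    simpa using (hasDerivAt_pow 2 x).const_add 1
  have h2 : HasDerivAt (fun x : ℝ => 2 * x * s) (2 * s) x := by
    simpa using ((hasDerivAt_id x).const_mul 2).mul_const s
  have h3 : HasDerivAt (fun x : ℝ => (1 + x ^ 2) ^ (s - 1))
      (2 * x * (s - 1) * (1 + x ^ 2) ^ (s - 1 - 1)) x := by
    simpa [mul_comm, mul_assoc, mul_left_comm] using
      h1.rpow_const (p := s - 1) (Or.inl (onepos x).ne')
  have h4 := h2.mul h3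
  have e : s - 1 - 1 = s - 2 := by ring
  rw [e] at h4
  have e2 : gW2 s x = 2 * s * (1 + x ^ 2) ^ (s - 1)
      + 2 * x * s * (2 * x * (s - 1) * (1 + x ^ 2) ^ (s - 2)) := rfl
  rw [e2]
  exact h4

lemma hasDerivAt_Fa (s u β α : ℝ) :
    HasDerivAt (fun α => (α - u) * gW s (β - u) + (u - α - β) * gW s u
      + (β - u) * gW s (α - u) + u * gW s (u - α - β))
      (gW s (β - u) - gW s u + (β - u) * gW1 s (α - u) - u * gW1 s (u - α - β)) α := by
  have hlin1 : HasDerivAt (fun α : ℝ => α - u) 1 α := (hasDerivAt_id α).sub_const u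
  have hlin2 : HasDerivAt (fun α : ℝ => u - α - β) (-1) α := by
    simpa using ((hasDerivAt_id α).const_sub u).sub_const β
  have t1 := hlin1.mul_const (gW s (β - u))
  have t2 := hlin2.mul_const (gW s u)
  have t3 : HasDerivAt (fun α : ℝ => gW s (α - u)) (gW1 s (α - u) * 1) α :=
    by have := (hasDerivAt_gW s (α - u)).comp α hlin1; exact this
  have t3' := t3.const_mul (β - u)
  have t4 : HasDerivAt (fun α : ℝ => gW s (u - α - β)) (gW1 s (u - α - β) * (-1)) α :=
    by have := (hasDerivAt_gW s (u - α - β)).comp α hlin2; exact this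
  have t4' := t4.const_mul u
  have total := ((t1.add t2).add t3').add t4'
  exact total.congr_deriv (by ring)

lemma hasDerivAt_Pb (s u α β : ℝ) :
    HasDerivAt (fun β => gW s (β - u) - gW s u + (β - u) * gW1 s (α - u)
      - u * gW1 s (u - α - β))
      (gW1 s (β - u) + gW1 s (α - u) + u * gW2 s (u - α - β)) β := by
  have hlin1 : HasDerivAt (fun β : ℝ => β - u) 1 β := (hasDerivAt_id β).sub_const u
  have hlin2 : HasDerivAt (fun β : ℝ => u - α - β) (-1) β := by
    have h : HasDerivAt (fun β : ℝ => (u - α) - β) (-1) β := by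
      simpa using (hasDerivAt_id β).const_sub (u - α)
    exact h
  have s1 : HasDerivAt (fun β : ℝ => gW s (β - u)) (gW1 s (β - u) * 1) β :=
    by have := (hasDerivAt_gW s (β - u)).comp β hlin1; exact this
  have s3 := hlin1.mul_const (gW1 s (α - u))
  have s4 : HasDerivAt (fun β : ℝ => gW1 s (u - α - β)) (gW2 s (u - α - β) * (-1)) β :=
    (hasDerivAt_gW1 s (u - α - β)).comp β hlin2
  have s4' := s4.const_mul u
  have total := ((s1.sub_const (gW s u)).add s3).sub s4'
  exact total.congr_deriv (by ring)

lemma P_zero (s u α : ℝ) :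
    gW s (0 - u) - gW s u + (0 - u) * gW1 s (α - u) - u * gW1 s (u - α - 0) = 0 := by
  rw [show (0:ℝ) - u = -u by ring, show u - α - 0 = -(α - u) by ring, gW_even, gW1_odd]
  ring

lemma F_zero (s u β : ℝ) :
    (0 - u) * gW s (β - u) + (u - 0 - β) * gW s u
      + (β - u) * gW s (0 - u) + u * gW s (u - 0 - β) = 0 := by
  rw [show (0:ℝ) - u = -u by ring, show u - 0 - β = -(β - u) by ring, gW_even, gW_even]
  ring

lemma abs_le_rpow_half (y : ℝ) : |y| ≤ (1 + y ^ 2) ^ ((1:ℝ)/2) := by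
  have h1 : |y| = (|y| ^ 2) ^ ((1:ℝ)/2) := by
    rw [← Real.rpow_natCast |y| 2, ← Real.rpow_mul (abs_nonneg y)]
    norm_num
  rw [h1]
  apply Real.rpow_le_rpow (by positivity) (by nlinarith [sq_abs y]) (by norm_num)

lemma base_lb {M x : ℝ} (hM : 0 ≤ M) (hx : M/2 ≤ |x|) : (1 + M ^ 2)/4 ≤ 1 + x ^ 2 := by
  have h := mul_self_le_mul_self (by linarith : (0:ℝ) ≤ M/2) hx
  nlinarith [sq_abs x]

lemma rpow_quarter_le {M x e : ℝ} (hM : 0 ≤ M) (hx : M/2 ≤ |x|) (he : e ≤ 0) (he2 : -1 ≤ e) :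
    (1 + x ^ 2) ^ e ≤ 4 * (1 + M ^ 2) ^ e := by
  have h1 : (1 + x ^ 2) ^ e ≤ ((1 + M ^ 2)/4) ^ e :=
    Real.rpow_le_rpow_of_nonpos (by positivity) (base_lb hM hx) he
  have h2 : ((1 + M ^ 2)/4) ^ e = (1 + M ^ 2) ^ e / (4:ℝ) ^ e :=
    Real.div_rpow (by positivity) (by norm_num) e
  have h3 : (4:ℝ) ^ (-1:ℝ) ≤ (4:ℝ) ^ e :=
    Real.rpow_le_rpow_of_exponent_le (by norm_num) he2
  have h4 : (4:ℝ) ^ (-1:ℝ) = 1/4 := by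
    rw [Real.rpow_neg_one]; norm_num
  have h34 : (1:ℝ)/4 ≤ (4:ℝ) ^ e := by rw [← h4]; exact h3
  have h5 : (1 + M ^ 2) ^ e / (4:ℝ) ^ e ≤ (1 + M ^ 2) ^ e / (1/4) :=
    div_le_div_of_nonneg_left (by positivity) (by norm_num) h34
  calc (1 + x ^ 2) ^ e ≤ (1 + M ^ 2) ^ e / (4:ℝ) ^ e := by rw [← h2]; exact h1
    _ ≤ (1 + M ^ 2) ^ e / (1/4) := h5
    _ = 4 * (1 + M ^ 2) ^ e := by ring

lemma bound_gW1 {s M x : ℝ} (hs0 : 0 < s) (hs : s < 1/2) (hM : 0 ≤ M) (hx : M/2 ≤ |x|) :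
    |gW1 s x| ≤ 8 * s * (1 + M ^ 2) ^ (s - 1/2) := by
  have habs : |gW1 s x| = 2 * s * |x| * (1 + x ^ 2) ^ (s - 1) := by
    simp only [gW1, abs_mul]
    rw [abs_of_pos hs0, abs_of_pos (Real.rpow_pos_of_pos (onepos x) _),
      abs_of_pos (show (0:ℝ) < 2 by norm_num)]
    ring
  rw [habs]
  have hp : (0:ℝ) < (1 + x ^ 2) ^ (s - 1) := Real.rpow_pos_of_pos (onepos x) _
  have h1 : 2 * s * |x| * (1 + x ^ 2) ^ (s - 1)
      ≤ 2 * s * ((1 + x ^ 2) ^ ((1:ℝ)/2) * (1 + x ^ 2) ^ (s - 1)) := by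
    have hh := mul_le_mul_of_nonneg_right (abs_le_rpow_half x) hp.le
    nlinarith [mul_le_mul_of_nonneg_left hh (by positivity : (0:ℝ) ≤ 2 * s)]
  have h2 : (1 + x ^ 2) ^ ((1:ℝ)/2) * (1 + x ^ 2) ^ (s - 1) = (1 + x ^ 2) ^ (s - 1/2) := by
    rw [← Real.rpow_add (onepos x)]; ring_nf
  have h3 : (1 + x ^ 2) ^ (s - 1/2) ≤ 4 * (1 + M ^ 2) ^ (s - 1/2) :=
    rpow_quarter_le hM hx (by linarith) (by linarith)
  calc 2 * s * |x| * (1 + x ^ 2) ^ (s - 1)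
      ≤ 2 * s * ((1 + x ^ 2) ^ (s - 1/2)) := by rw [← h2]; exact h1
    _ ≤ 2 * s * (4 * (1 + M ^ 2) ^ (s - 1/2)) := by
        nlinarith [mul_le_mul_of_nonneg_left h3 (by positivity : (0:ℝ) ≤ 2 * s)]
    _ = 8 * s * (1 + M ^ 2) ^ (s - 1/2) := by ring

lemma bound_gW2 {s M x : ℝ} (hs0 : 0 < s) (hs : s < 1/2) (hM : 0 ≤ M) (hx : M/2 ≤ |x|) :
    |gW2 s x| ≤ 8 * s * (1 + M ^ 2) ^ (s - 1) := by
  have key : (1 + x ^ 2) ^ (s - 1) = (1 + x ^ 2) ^ (s - 2) * (1 + x ^ 2) := by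
    rw [show s - 1 = (s - 2) + 1 by ring, Real.rpow_add (onepos x), Real.rpow_one]
  have e : gW2 s x = 2 * s * (1 + x ^ 2) ^ (s - 2) * (1 + (2*s - 1) * x ^ 2) := by
    simp only [gW2]; rw [key]; ring
  rw [e]
  have hA : (0:ℝ) < (1 + x ^ 2) ^ (s - 2) := Real.rpow_pos_of_pos (onepos x) _
  have h1 : |2 * s * (1 + x ^ 2) ^ (s - 2) * (1 + (2*s - 1) * x ^ 2)|
      ≤ 2 * s * ((1 + x ^ 2) ^ (s - 2) * (1 + x ^ 2)) := by
    rw [abs_mul, abs_of_pos (by positivity : (0:ℝ) < 2 * s * (1 + x ^ 2) ^ (s - 2))]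
    have habs : |1 + (2*s - 1) * x ^ 2| ≤ 1 + x ^ 2 := by
      rw [abs_le]
      constructor <;> nlinarith [sq_nonneg x]
    nlinarith [mul_le_mul_of_nonneg_left habs
      (by positivity : (0:ℝ) ≤ 2 * s * (1 + x ^ 2) ^ (s - 2))]
  rw [← key] at h1
  have h3 : (1 + x ^ 2) ^ (s - 1) ≤ 4 * (1 + M ^ 2) ^ (s - 1) :=
    rpow_quarter_le hM hx (by linarith) (by linarith)
  calc |2 * s * (1 + x ^ 2) ^ (s - 2) * (1 + (2*s - 1) * x ^ 2)|
      ≤ 2 * s * (1 + x ^ 2) ^ (s - 1) := h1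
    _ ≤ 2 * s * (4 * (1 + M ^ 2) ^ (s - 1)) := by
        nlinarith [mul_le_mul_of_nonneg_left h3 (by positivity : (0:ℝ) ≤ 2 * s)]
    _ = 8 * s * (1 + M ^ 2) ^ (s - 1) := by ring

lemma bound_u_gW2 {s M u x : ℝ} (hs0 : 0 < s) (hs : s < 1/2) (hu : |u| ≤ M)
    (hx : M/2 ≤ |x|) : |u * gW2 s x| ≤ 8 * s * (1 + M ^ 2) ^ (s - 1/2) := by
  have h0 : (0:ℝ) ≤ M := le_trans (abs_nonneg u) hu
  have h1 : |u| ≤ (1 + M ^ 2) ^ ((1:ℝ)/2) := by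
    calc |u| ≤ M := hu
      _ = |M| := (abs_of_nonneg h0).symm
      _ ≤ (1 + M ^ 2) ^ ((1:ℝ)/2) := abs_le_rpow_half M
  have h2 := bound_gW2 hs0 hs h0 hx
  have h3 : (1 + M ^ 2) ^ ((1:ℝ)/2) * (1 + M ^ 2) ^ (s - 1) = (1 + M ^ 2) ^ (s - 1/2) := by
    rw [← Real.rpow_add (onepos M)]; ring_nf
  calc |u * gW2 s x| = |u| * |gW2 s x| := abs_mul u _
    _ ≤ (1 + M ^ 2) ^ ((1:ℝ)/2) * (8 * s * (1 + M ^ 2) ^ (s - 1)) := by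
        apply mul_le_mul h1 h2 (abs_nonneg _) (by positivity)
    _ = 8 * s * (1 + M ^ 2) ^ (s - 1/2) := by rw [← h3]; ring

lemma abs_le_of_mem_uIcc {a α : ℝ} (h : α ∈ Set.uIcc 0 a) : |α| ≤ |a| := by
  rcases Set.mem_uIcc.1 h with ⟨h1, h2⟩ | ⟨h1, h2⟩ <;>
    rw [abs_le] <;> constructor <;>
    linarith [le_abs_self a, neg_abs_le a, abs_nonneg a]

/-- Case (i), second subcase: if the largest frequency is much bigger than
both |ξ₁+ξ₄| and |ξ₃+ξ₄| (i.e. N₍₁₎ ≥ K·max{|ξ₁+ξ₄|,|ξ₃+ξ₄|} for a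
sufficiently large constant K), then |M₄| ≲ ⟨N₍₁₎⟩^{2s-1}. -/
theorem stmt_5 (s : ℝ) (hs0 : 0 < s) (hs : s < 1 / 2) :
    ∃ K C : ℝ, 0 < K ∧ 0 < C ∧ ∀ ξ₁ ξ₂ ξ₃ ξ₄ : ℤ,
      ξ₁ + ξ₂ + ξ₃ + ξ₄ = 0 → ((ξ₁ : ℝ) + ξ₄) * ((ξ₃ : ℝ) + ξ₄) ≠ 0 →
      K * max |(ξ₁ : ℝ) + ξ₄| |(ξ₃ : ℝ) + ξ₄|
          ≤ max (max |(ξ₁ : ℝ)| |(ξ₂ : ℝ)|) (max |(ξ₃ : ℝ)| |(ξ₄ : ℝ)|) →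
      |M4 s ξ₁ ξ₂ ξ₃ ξ₄|
        ≤ C * jb (max (max |(ξ₁ : ℝ)| |(ξ₂ : ℝ)|) (max |(ξ₃ : ℝ)| |(ξ₄ : ℝ)|))
              ^ (2 * s - 1) := by
  refine ⟨8, 24 * s, by norm_num, by positivity, ?_⟩
  intro ξ₁ ξ₂ ξ₃ ξ₄ hsum hden hK
  have hsumR : (ξ₁:ℝ) + ξ₂ + ξ₃ + ξ₄ = 0 := by exact_mod_cast hsum
  set a : ℝ := (ξ₁ : ℝ) + ξ₄ with ha_def
  set b : ℝ := (ξ₃ : ℝ) + ξ₄ with hb_def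
  set u : ℝ := (ξ₄ : ℝ) with hu_def
  set M : ℝ := max (max |(ξ₁:ℝ)| |(ξ₂:ℝ)|) (max |(ξ₃:ℝ)| |(ξ₄:ℝ)|) with hM_def
  set m : ℝ := max |a| |b| with hm_def
  obtain ⟨ha0, hb0⟩ := mul_ne_zero_iff.1 hden
  have hacast : ((ξ₁ + ξ₄ : ℤ) : ℝ) = a := by rw [ha_def]; push_cast; ring
  have hbcast : ((ξ₃ + ξ₄ : ℤ) : ℝ) = b := by rw [hb_def]; push_cast; ring
  have haz : (ξ₁ + ξ₄ : ℤ) ≠ 0 := by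
    intro h; apply ha0; rw [← hacast, h]; simp
  have hbz : (ξ₃ + ξ₄ : ℤ) ≠ 0 := by
    intro h; apply hb0; rw [← hbcast, h]; simp
  have ha1 : (1:ℝ) ≤ |a| := by
    rw [← hacast, ← Int.cast_abs]; exact_mod_cast Int.one_le_abs haz
  have hb1 : (1:ℝ) ≤ |b| := by
    rw [← hbcast, ← Int.cast_abs]; exact_mod_cast Int.one_le_abs hbz
  have hma : |a| ≤ m := le_max_left _ _
  have hmb : |b| ≤ m := le_max_right _ _
  have hm1 : (1:ℝ) ≤ m := le_trans ha1 hma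
  have hm0 : (0:ℝ) ≤ m := by linarith
  have hKm : 8 * m ≤ M := hK
  have hM0 : (0:ℝ) ≤ M := by linarith
  have huM : |u| ≤ M := by
    rw [hM_def]; exact le_trans (le_max_right _ _) (le_max_right _ _)
  have e1 : (ξ₁:ℝ) = a - u := by rw [ha_def, hu_def]; ring
  have e3 : (ξ₃:ℝ) = b - u := by rw [hb_def, hu_def]; ring
  have e2 : (ξ₂:ℝ) = u - a - b := by rw [ha_def, hb_def, hu_def]; linarith
  -- lower bound on |u|
  have habs_sub : ∀ x y : ℝ, |x - y| ≤ |x| + |y| := by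
    intro x y
    calc |x - y| = |x + (-y)| := by rw [sub_eq_add_neg]
      _ ≤ |x| + |(-y)| := abs_add_le _ _
      _ = |x| + |y| := by rw [abs_neg]
  have h1' : |(ξ₁:ℝ)| ≤ |u| + 2 * m := by
    rw [e1]
    have := habs_sub a u
    linarith
  have h3' : |(ξ₃:ℝ)| ≤ |u| + 2 * m := by
    rw [e3]
    have := habs_sub b u
    linarith
  have h2' : |(ξ₂:ℝ)| ≤ |u| + 2 * m := by
    rw [e2]
    calc |u - a - b| ≤ |u - a| + |b| := habs_sub (u - a) b
      _ ≤ |u| + |a| + |b| := by linarith [habs_sub u a]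
      _ ≤ |u| + 2 * m := by linarith
  have h4' : |(ξ₄:ℝ)| ≤ |u| + 2 * m := by
    rw [← hu_def]; linarith
  have hMle : M ≤ |u| + 2 * m := by
    rw [hM_def]
    exact max_le (max_le h1' h2') (max_le h3' h4')
  have huge : M - 2 * m ≤ |u| := by linarith
  -- bound on the second derivative expression
  have hQ : ∀ α β : ℝ, |α| ≤ m → |β| ≤ m →
      |gW1 s (β - u) + gW1 s (α - u) + u * gW2 s (u - α - β)|
        ≤ 24 * s * (1 + M ^ 2) ^ (s - 1/2) := by
    intro α β hα hβ
    have hx1 : M/2 ≤ |β - u| := by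
      have h := abs_sub_abs_le_abs_sub u β
      rw [abs_sub_comm u β] at h
      linarith
    have hx2 : M/2 ≤ |α - u| := by
      have h := abs_sub_abs_le_abs_sub u α
      rw [abs_sub_comm u α] at h
      linarith
    have hx3 : M/2 ≤ |u - α - β| := by
      have h := abs_sub_abs_le_abs_sub u (α + β)
      have e : u - (α + β) = u - α - β := by ring
      rw [e] at h
      have h2 : |α + β| ≤ |α| + |β| := abs_add_le _ _
      linarith
    have b1 := bound_gW1 hs0 hs hM0 hx1
    have b2 := bound_gW1 hs0 hs hM0 hx2
    have b3 := bound_u_gW2 hs0 hs huM hx3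
    calc |gW1 s (β - u) + gW1 s (α - u) + u * gW2 s (u - α - β)|
        ≤ |gW1 s (β - u) + gW1 s (α - u)| + |u * gW2 s (u - α - β)| := abs_add_le _ _
      _ ≤ |gW1 s (β - u)| + |gW1 s (α - u)| + |u * gW2 s (u - α - β)| := by
          linarith [abs_add_le (gW1 s (β - u)) (gW1 s (α - u))]
      _ ≤ 24 * s * (1 + M ^ 2) ^ (s - 1/2) := by linarith
  -- inner mean value estimate
  have hInner : ∀ α : ℝ, |α| ≤ m →
      |gW s (b - u) - gW s u + (b - u) * gW1 s (α - u) - u * gW1 s (u - α - b)|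
        ≤ 24 * s * (1 + M ^ 2) ^ (s - 1/2) * |b| := by
    intro α hα
    have hder : ∀ β ∈ Set.uIcc (0:ℝ) b,
        HasDerivWithinAt (fun β => gW s (β - u) - gW s u + (β - u) * gW1 s (α - u)
          - u * gW1 s (u - α - β))
          (gW1 s (β - u) + gW1 s (α - u) + u * gW2 s (u - α - β)) (Set.uIcc (0:ℝ) b) β :=
      fun β _ => (hasDerivAt_Pb s u α β).hasDerivWithinAt
    have hbound : ∀ β ∈ Set.uIcc (0:ℝ) b,
        ‖gW1 s (β - u) + gW1 s (α - u) + u * gW2 s (u - α - β)‖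
          ≤ 24 * s * (1 + M ^ 2) ^ (s - 1/2) := by
      intro β hβ
      rw [Real.norm_eq_abs]
      exact hQ α β hα (le_trans (abs_le_of_mem_uIcc hβ) hmb)
    have key := Convex.norm_image_sub_le_of_norm_hasDerivWithin_le hder hbound
      (convex_uIcc (0:ℝ) b) (Set.left_mem_uIcc) (Set.right_mem_uIcc)
    simp only [Real.norm_eq_abs, sub_zero] at key
    have hz : gW s (0 - u) - gW s u + (0 - u) * gW1 s (α - u) - u * gW1 s (u - α) = 0 := by
      rw [show (0:ℝ) - u = -u by ring, show u - α = -(α - u) by ring, gW_even, gW1_odd]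
      ring
    rw [hz, sub_zero] at key
    exact key
  -- outer mean value estimate
  have hOuter :
      |(a - u) * gW s (b - u) + (u - a - b) * gW s u
        + (b - u) * gW s (a - u) + u * gW s (u - a - b)|
        ≤ 24 * s * (1 + M ^ 2) ^ (s - 1/2) * |b| * |a| := by
    have hder : ∀ α ∈ Set.uIcc (0:ℝ) a,
        HasDerivWithinAt (fun α => (α - u) * gW s (b - u) + (u - α - b) * gW s u
          + (b - u) * gW s (α - u) + u * gW s (u - α - b))
          (gW s (b - u) - gW s u + (b - u) * gW1 s (α - u) - u * gW1 s (u - α - b))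
          (Set.uIcc (0:ℝ) a) α :=
      fun α _ => (hasDerivAt_Fa s u b α).hasDerivWithinAt
    have hbound : ∀ α ∈ Set.uIcc (0:ℝ) a,
        ‖gW s (b - u) - gW s u + (b - u) * gW1 s (α - u) - u * gW1 s (u - α - b)‖
          ≤ 24 * s * (1 + M ^ 2) ^ (s - 1/2) * |b| := by
      intro α hα
      rw [Real.norm_eq_abs]
      exact hInner α (le_trans (abs_le_of_mem_uIcc hα) hma)
    have key := Convex.norm_image_sub_le_of_norm_hasDerivWithin_le hder hbound
      (convex_uIcc (0:ℝ) a) (Set.left_mem_uIcc) (Set.right_mem_uIcc)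
    simp only [Real.norm_eq_abs, sub_zero] at key
    have hz : (0 - u) * gW s (b - u) + (u - b) * gW s u
        + (b - u) * gW s (0 - u) + u * gW s (u - b) = 0 := by
      rw [show (0:ℝ) - u = -u by ring, show u - b = -(b - u) by ring, gW_even, gW_even]
      ring
    rw [hz, sub_zero] at key
    exact key
  -- identify the numerator
  have hnum : (ξ₁ : ℝ) * (1 + (ξ₃ : ℝ) ^ 2) ^ s + (ξ₂ : ℝ) * (1 + (ξ₄ : ℝ) ^ 2) ^ s
      + (ξ₃ : ℝ) * (1 + (ξ₁ : ℝ) ^ 2) ^ s + (ξ₄ : ℝ) * (1 + (ξ₂ : ℝ) ^ 2) ^ s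
      = (a - u) * gW s (b - u) + (u - a - b) * gW s u
        + (b - u) * gW s (a - u) + u * gW s (u - a - b) := by
    simp only [gW]
    rw [← e1, ← e2, ← e3, ← hu_def]
  have hM4 : M4 s ξ₁ ξ₂ ξ₃ ξ₄
      = ((a - u) * gW s (b - u) + (u - a - b) * gW s u
        + (b - u) * gW s (a - u) + u * gW s (u - a - b)) / (a * b) := by
    unfold M4
    rw [hnum, ← ha_def, ← hb_def]
  have hapos : (0:ℝ) < |a| := abs_pos.2 ha0
  have hbpos : (0:ℝ) < |b| := abs_pos.2 hb0
  have hfinal : |M4 s ξ₁ ξ₂ ξ₃ ξ₄| ≤ 24 * s * (1 + M ^ 2) ^ (s - 1/2) := by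
    rw [hM4, abs_div, abs_mul, div_le_iff₀ (mul_pos hapos hbpos)]
    calc |(a - u) * gW s (b - u) + (u - a - b) * gW s u
        + (b - u) * gW s (a - u) + u * gW s (u - a - b)|
        ≤ 24 * s * (1 + M ^ 2) ^ (s - 1/2) * |b| * |a| := hOuter
      _ = 24 * s * (1 + M ^ 2) ^ (s - 1/2) * (|a| * |b|) := by ring
  have hjb : jb M ^ (2 * s - 1) = (1 + M ^ 2) ^ (s - 1/2) := by
    rw [jb, Real.sqrt_eq_rpow, ← Real.rpow_mul (by positivity : (0:ℝ) ≤ 1 + M ^ 2)]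
    rw [show (1/2:ℝ) * (2 * s - 1) = s - 1/2 by ring]
  rw [hjb]
  exact hfinal
end

section
/- Let 0 < s < 1/2 and let M₄(ξ̄) = (ξ₁⟨ξ₃⟩^{2s} + ξ₂⟨ξ₄⟩^{2s} + ξ₃⟨ξ₁⟩^{2s} + ξ₄⟨ξ₂⟩^{2s})/((ξ₁+ξ₄)(ξ₃+ξ₄)) on {ξ₁+ξ₂+ξ₃+ξ₄ = 0, (ξ₁+ξ₄)(ξ₃+ξ₄) ≠ 0}. Assume max{|ξ₁|,|ξ₃|} is the largest among the |ξⱼ|, the second largest is the other of |ξ₁|,|ξ₃|, and max{|ξ₂|,|ξ₄|} ≤ c·max{|ξ₁|,|ξ₃|} for a sufficiently small constant c > 0. Then |M₄(ξ̄)| ≤ C·⟨max{|ξ₂|,|ξ₄|}⟩·⟨max{|ξ₁|,|ξ₃|}⟩^{2s-2}. -/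
open Real

lemma rpow_sub_le' (s : ℝ) (hs1 : s ≤ 1) {a b : ℝ} (hb : 1 ≤ b) (hab : b ≤ a) :
    a ^ s - b ^ s ≤ (a - b) * b ^ (s - 1) := by
  have hb0 : (0:ℝ) < b := lt_of_lt_of_le one_pos hb
  have ha0 : (0:ℝ) < a := lt_of_lt_of_le hb0 hab
  have h1 : a ^ s = a * a ^ (s - 1) := by
    conv_lhs => rw [show s = 1 + (s-1) by ring]
    rw [Real.rpow_add ha0, Real.rpow_one]
  have h2 : b ^ s = b * b ^ (s - 1) := by
    conv_lhs => rw [show s = 1 + (s-1) by ring]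
    rw [Real.rpow_add hb0, Real.rpow_one]
  have h3 : a ^ (s-1) ≤ b ^ (s-1) :=
    Real.rpow_le_rpow_of_nonpos hb0 hab (by linarith)
  have h4 : a * a ^ (s-1) ≤ a * b ^ (s-1) := mul_le_mul_of_nonneg_left h3 ha0.le
  calc a ^ s - b ^ s = a * a^(s-1) - b * b^(s-1) := by rw [h1, h2]
    _ ≤ a * b^(s-1) - b * b^(s-1) := by linarith
    _ = (a - b) * b ^ (s-1) := by ring

lemma abs_rpow_sub_le (s : ℝ) (hs0 : 0 ≤ s) (hs1 : s ≤ 1) {a b L : ℝ} (hL : 1 ≤ L)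
    (hLa : L ≤ a) (hLb : L ≤ b) :
    |a ^ s - b ^ s| ≤ |a - b| * L ^ (s - 1) := by
  have hL0 : (0:ℝ) < L := lt_of_lt_of_le one_pos hL
  have key : ∀ x y : ℝ, L ≤ x → L ≤ y → y ≤ x →
      |x ^ s - y ^ s| ≤ |x - y| * L ^ (s - 1) := by
    intro x y hx hy hxy
    have h1 := rpow_sub_le' s hs1 (le_trans hL hy) hxy
    have h2 : y ^ (s-1) ≤ L ^ (s-1) :=
      Real.rpow_le_rpow_of_nonpos hL0 hy (by linarith)
    have hys : y ^ s ≤ x ^ s := Real.rpow_le_rpow (by linarith) hxy hs0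
    rw [abs_of_nonneg (by linarith), abs_of_nonneg (by linarith)]
    calc x ^ s - y ^ s ≤ (x - y) * y ^ (s-1) := h1
      _ ≤ (x - y) * L ^ (s-1) := mul_le_mul_of_nonneg_left h2 (by linarith)
  rcases le_total b a with h | h
  · exact key a b hLa hLb h
  · rw [abs_sub_comm, abs_sub_comm a b]; exact key b a hLb hLa h

set_option maxHeartbeats 1000000 in
lemma core_est (s : ℝ) (hs0 : 0 < s) (hs : s < 1 / 2)
    (x1 x2 x3 x4 m N : ℝ)
    (hsumR : x1 + x2 + x3 + x4 = 0) (hden : (x1 + x4) * (x3 + x4) ≠ 0)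
    (hm : m = max |x2| |x4|) (hN : N = max |x1| |x3|)
    (hN1 : 1 ≤ N) (hmN : m ≤ N / 10) :
    |(x1 * (1 + x3 ^ 2) ^ s + x2 * (1 + x4 ^ 2) ^ s
        + x3 * (1 + x1 ^ 2) ^ s + x4 * (1 + x2 ^ 2) ^ s)
      / ((x1 + x4) * (x3 + x4))|
      ≤ 100 * Real.sqrt (1 + m ^ 2) * Real.sqrt (1 + N ^ 2) ^ (2 * s - 2) := by
  have h2m : |x2| ≤ m := hm ▸ le_max_left _ _
  have h4m : |x4| ≤ m := hm ▸ le_max_right _ _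
  have h1N : |x1| ≤ N := hN ▸ le_max_left _ _
  have h3N : |x3| ≤ N := hN ▸ le_max_right _ _
  have hm0 : 0 ≤ m := le_trans (abs_nonneg x2) h2m
  have h13 : |x1 + x3| ≤ 2 * m := by
    have he : x1 + x3 = -(x2 + x4) := by linarith
    rw [he, abs_neg]
    calc |x2 + x4| ≤ |x2| + |x4| := abs_add_le _ _
      _ ≤ 2 * m := by linarith
  have key3 : |x3| ≤ |x1 + x3| + |x1| := by
    calc |x3| = |(x1 + x3) + -x1| := by congr 1 <;> ring
      _ ≤ |x1 + x3| + |-x1| := abs_add_le _ _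
      _ = |x1 + x3| + |x1| := by rw [abs_neg]
  have key1 : |x1| ≤ |x1 + x3| + |x3| := by
    calc |x1| = |(x1 + x3) + -x3| := by congr 1 <;> ring
      _ ≤ |x1 + x3| + |-x3| := abs_add_le _ _
      _ = |x1 + x3| + |x3| := by rw [abs_neg]
  have hlow1 : N - 2*m ≤ |x1| := by
    rcases max_cases |x1| |x3| with ⟨hN', _⟩ | ⟨hN', _⟩ <;> rw [hN, hN'] <;> linarith
  have hlow3 : N - 2*m ≤ |x3| := by
    rcases max_cases |x1| |x3| with ⟨hN', _⟩ | ⟨hN', _⟩ <;> rw [hN, hN'] <;> linarith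
  have hd1 : 7*N/10 ≤ |x1 + x4| := by
    have h : |x1| ≤ |x1 + x4| + |x4| := by
      calc |x1| = |(x1 + x4) + -x4| := by congr 1 <;> ring
        _ ≤ |x1 + x4| + |-x4| := abs_add_le _ _
        _ = |x1 + x4| + |x4| := by rw [abs_neg]
    linarith
  have hd3 : 7*N/10 ≤ |x3 + x4| := by
    have h : |x3| ≤ |x3 + x4| + |x4| := by
      calc |x3| = |(x3 + x4) + -x4| := by congr 1 <;> ring
        _ ≤ |x3 + x4| + |-x4| := abs_add_le _ _
        _ = |x3 + x4| + |x4| := by rw [abs_neg]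
    linarith
  have hdenpos : 0 < |(x1 + x4) * (x3 + x4)| := abs_pos.mpr hden
  have hdenlb : 49/100 * N^2 ≤ |(x1 + x4) * (x3 + x4)| := by
    rw [abs_mul]
    nlinarith [hd1, hd3, hN1, abs_nonneg (x1 + x4), abs_nonneg (x3 + x4)]
  have hNsq : (0:ℝ) < 1 + N^2 := by positivity
  have hTpos : 0 < (1 + N^2) ^ (s - 1) := Real.rpow_pos_of_pos hNsq _
  have hS : (1 + N^2) ^ s = (1 + N^2) * (1 + N^2) ^ (s - 1) := by
    conv_lhs => rw [show s = 1 + (s-1) by ring]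
    rw [Real.rpow_add hNsq, Real.rpow_one]
  have hSle : (1 + N^2) ^ s ≤ 2 * N^2 * (1 + N^2) ^ (s - 1) := by
    rw [hS]
    have h1 : (0:ℝ) ≤ N^2 - 1 := by nlinarith
    nlinarith [mul_nonneg h1 hTpos.le]
  have sq_le : ∀ x : ℝ, |x| ≤ N → (1 + x^2) ^ s ≤ (1 + N^2) ^ s := by
    intro x hx
    apply Real.rpow_le_rpow (by positivity) ?_ hs0.le
    nlinarith [sq_abs x, abs_nonneg x]
  have hP : (1 + x1^2) ^ s ≤ (1 + N^2) ^ s := sq_le x1 h1N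
  have hR2 : (1 + x2^2) ^ s ≤ (1 + N^2) ^ s := sq_le x2 (by linarith)
  have hR4 : (1 + x4^2) ^ s ≤ (1 + N^2) ^ s := sq_le x4 (by linarith)
  have hL1 : (16/25) * (1 + N^2) ≤ 1 + x1^2 := by
    have h45 : 4*N/5 ≤ |x1| := by linarith
    have h : (4*N/5)^2 ≤ x1^2 := by
      rw [← sq_abs x1]; exact pow_le_pow_left₀ (by linarith) h45 2
    nlinarith [h]
  have hL3 : (16/25) * (1 + N^2) ≤ 1 + x3^2 := by
    have h45 : 4*N/5 ≤ |x3| := by linarith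
    have h : (4*N/5)^2 ≤ x3^2 := by
      rw [← sq_abs x3]; exact pow_le_pow_left₀ (by linarith) h45 2
    nlinarith [h]
  have hLge1 : 1 ≤ (16/25) * (1 + N^2) := by nlinarith [hN1, sq_nonneg (N-1)]
  have hdiff : |(1 + x3^2) ^ s - (1 + x1^2) ^ s|
      ≤ |x3^2 - x1^2| * ((16/25) * (1 + N^2)) ^ (s - 1) := by
    have h := abs_rpow_sub_le s hs0.le (by linarith) hLge1 hL3 hL1
    rw [show (1 + x3^2) - (1 + x1^2) = x3^2 - x1^2 by ring] at h
    exact h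
  have hx31 : |x3^2 - x1^2| ≤ 4 * N * m := by
    rw [show x3^2 - x1^2 = (x3 + x1) * (x3 - x1) by ring, abs_mul]
    have e1 : |x3 + x1| ≤ 2*m := by rw [show x3 + x1 = x1 + x3 by ring]; exact h13
    have e2 : |x3 - x1| ≤ 2*N := by
      calc |x3 - x1| = |x3 + -x1| := by congr 1 <;> ring
        _ ≤ |x3| + |-x1| := abs_add_le _ _
        _ ≤ 2*N := by rw [abs_neg]; linarith
    nlinarith [mul_le_mul e1 e2 (abs_nonneg _) (by linarith : (0:ℝ) ≤ 2*m),
      abs_nonneg (x3 + x1), abs_nonneg (x3 - x1)]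
  have hLpow : ((16/25) * (1 + N^2)) ^ (s - 1) ≤ (25/16) * (1 + N^2) ^ (s - 1) := by
    rw [Real.mul_rpow (by norm_num) hNsq.le]
    have h1 : ((16/25:ℝ)) ^ (s-1) ≤ ((16/25:ℝ)) ^ (-1:ℝ) :=
      Real.rpow_le_rpow_of_exponent_ge (by norm_num) (by norm_num) (by linarith)
    have h2 : ((16/25:ℝ)) ^ (-1:ℝ) = 25/16 := by
      rw [Real.rpow_neg_one]; norm_num
    rw [h2] at h1
    exact mul_le_mul_of_nonneg_right h1 hTpos.le
  have hRnn : ∀ x : ℝ, (0:ℝ) ≤ (1 + x^2) ^ s := fun x =>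
    (Real.rpow_pos_of_pos (by positivity) s).le
  -- numerator bound
  have hnumb : |x1 * (1 + x3^2)^s + x2 * (1 + x4^2)^s + x3 * (1 + x1^2)^s
      + x4 * (1 + x2^2)^s| ≤ 15 * N^2 * m * (1 + N^2) ^ (s - 1) := by
    have t1 : |x1 * ((1 + x3^2)^s - (1 + x1^2)^s)|
        ≤ N * (4*N*m * ((25/16) * (1 + N^2) ^ (s - 1))) := by
      rw [abs_mul]
      have hd : |(1 + x3^2)^s - (1 + x1^2)^s|
          ≤ 4*N*m * ((25/16) * (1 + N^2) ^ (s - 1)) := by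
        calc |(1 + x3^2)^s - (1 + x1^2)^s|
            ≤ |x3^2 - x1^2| * ((16/25) * (1 + N^2)) ^ (s - 1) := hdiff
          _ ≤ (4*N*m) * ((25/16) * (1 + N^2) ^ (s - 1)) := by
              have hcn : (0:ℝ) ≤ ((16/25) * (1 + N^2)) ^ (s - 1) :=
                Real.rpow_nonneg (by positivity) _
              have hbn : (0:ℝ) ≤ 4*N*m :=
                mul_nonneg (by linarith : (0:ℝ) ≤ 4*N) hm0
              exact mul_le_mul hx31 hLpow hcn hbn
      exact mul_le_mul h1N hd (abs_nonneg _) (by linarith)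
    have t2 : |(x1 + x3) * (1 + x1^2)^s| ≤ 2*m * (2*N^2*(1 + N^2) ^ (s - 1)) := by
      rw [abs_mul, abs_of_nonneg (hRnn x1)]
      exact mul_le_mul h13 (le_trans hP hSle) (hRnn x1) (by linarith)
    have t3 : |x2 * (1 + x4^2)^s| ≤ m * (2*N^2*(1 + N^2) ^ (s - 1)) := by
      rw [abs_mul, abs_of_nonneg (hRnn x4)]
      exact mul_le_mul h2m (le_trans hR4 hSle) (hRnn x4) hm0
    have t4 : |x4 * (1 + x2^2)^s| ≤ m * (2*N^2*(1 + N^2) ^ (s - 1)) := by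
      rw [abs_mul, abs_of_nonneg (hRnn x2)]
      exact mul_le_mul h4m (le_trans hR2 hSle) (hRnn x2) hm0
    have habs : |x1 * (1 + x3^2)^s + x2 * (1 + x4^2)^s + x3 * (1 + x1^2)^s
        + x4 * (1 + x2^2)^s| ≤ |x1 * ((1 + x3^2)^s - (1 + x1^2)^s)|
        + |(x1 + x3) * (1 + x1^2)^s| + |x2 * (1 + x4^2)^s| + |x4 * (1 + x2^2)^s| := by
      have e : x1 * (1 + x3^2)^s + x2 * (1 + x4^2)^s + x3 * (1 + x1^2)^s
          + x4 * (1 + x2^2)^s = (x1 * ((1 + x3^2)^s - (1 + x1^2)^s)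
          + (x1 + x3) * (1 + x1^2)^s) + (x2 * (1 + x4^2)^s + x4 * (1 + x2^2)^s) := by
        ring
      rw [e]
      have a1 := abs_add_le (x1 * ((1 + x3^2)^s - (1 + x1^2)^s)
        + (x1 + x3) * (1 + x1^2)^s) (x2 * (1 + x4^2)^s + x4 * (1 + x2^2)^s)
      have a2 := abs_add_le (x1 * ((1 + x3^2)^s - (1 + x1^2)^s))
        ((x1 + x3) * (1 + x1^2)^s)
      have a3 := abs_add_le (x2 * (1 + x4^2)^s) (x4 * (1 + x2^2)^s)
      linarith
    have hnn : 0 ≤ N^2 * m * (1 + N^2) ^ (s - 1) := by positivity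
    nlinarith [t1, t2, t3, t4, habs, hnn]
  -- conclusion
  have hjbN : Real.sqrt (1 + N^2) ^ (2*s - 2) = (1 + N^2) ^ (s - 1) := by
    rw [Real.sqrt_eq_rpow, ← Real.rpow_mul hNsq.le]
    congr 1 <;> ring
  have hjm1 : 1 ≤ Real.sqrt (1 + m^2) := by
    have h := Real.sqrt_le_sqrt (show (1:ℝ) ≤ 1 + m^2 by nlinarith [sq_nonneg m])
    simpa using h
  have hjmm : m ≤ Real.sqrt (1 + m^2) := by
    calc m = Real.sqrt (m^2) := (Real.sqrt_sq hm0).symm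
      _ ≤ _ := Real.sqrt_le_sqrt (by linarith)
  rw [abs_div, div_le_iff₀ hdenpos, hjbN]
  have step1 : |x1 * (1 + x3^2)^s + x2 * (1 + x4^2)^s + x3 * (1 + x1^2)^s
      + x4 * (1 + x2^2)^s|
      ≤ 100 * Real.sqrt (1 + m^2) * (1 + N^2) ^ (s - 1) * (49/100 * N^2) := by
    have ha : 0 ≤ (Real.sqrt (1 + m^2) - m) * (N^2 * (1 + N^2) ^ (s - 1)) :=
      mul_nonneg (by linarith) (by positivity)
    have hb : 0 ≤ m * (N^2 * (1 + N^2) ^ (s - 1)) := by positivity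
    linarith [ha, hb, hnumb]
  calc |x1 * (1 + x3^2)^s + x2 * (1 + x4^2)^s + x3 * (1 + x1^2)^s
      + x4 * (1 + x2^2)^s|
      ≤ 100 * Real.sqrt (1 + m^2) * (1 + N^2) ^ (s - 1) * (49/100 * N^2) := step1
    _ ≤ 100 * Real.sqrt (1 + m^2) * (1 + N^2) ^ (s - 1)
        * |(x1 + x4) * (x3 + x4)| := by
        apply mul_le_mul_of_nonneg_left hdenlb
        have h : 0 < Real.sqrt (1 + m^2) := lt_of_lt_of_le one_pos hjm1
        positivity

/-- Case (iii) of the pointwise multiplier estimate for M₄: if ξ₁, ξ₃ carry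
the two largest frequencies and ξ₂, ξ₄ are much smaller, then
|M₄| ≲ ⟨max{|ξ₂|,|ξ₄|}⟩·⟨max{|ξ₁|,|ξ₃|}⟩^{2s-2}. -/
theorem stmt_6 (s : ℝ) (hs0 : 0 < s) (hs : s < 1 / 2) :
    ∃ c C : ℝ, 0 < c ∧ 0 < C ∧ ∀ ξ₁ ξ₂ ξ₃ ξ₄ : ℤ,
      ξ₁ + ξ₂ + ξ₃ + ξ₄ = 0 → ((ξ₁ : ℝ) + ξ₄) * ((ξ₃ : ℝ) + ξ₄) ≠ 0 →
      max |(ξ₂ : ℝ)| |(ξ₄ : ℝ)| ≤ min |(ξ₁ : ℝ)| |(ξ₃ : ℝ)| →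
      max |(ξ₂ : ℝ)| |(ξ₄ : ℝ)| ≤ c * max |(ξ₁ : ℝ)| |(ξ₃ : ℝ)| →
      |M4 s ξ₁ ξ₂ ξ₃ ξ₄|
        ≤ C * jb (max |(ξ₂ : ℝ)| |(ξ₄ : ℝ)|)
            * jb (max |(ξ₁ : ℝ)| |(ξ₃ : ℝ)|) ^ (2 * s - 2) := by
  refine ⟨1/10, 100, by norm_num, by norm_num, ?_⟩
  intro ξ₁ ξ₂ ξ₃ ξ₄ hsum hden hmin hc
  have hsumR : (ξ₁:ℝ) + ξ₂ + ξ₃ + ξ₄ = 0 := by exact_mod_cast hsum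
  have h4m : |(ξ₄:ℝ)| ≤ max |(ξ₂:ℝ)| |(ξ₄:ℝ)| := le_max_right _ _
  have hx1ne : ξ₁ ≠ 0 := by
    intro h
    have hm' : max |(ξ₂:ℝ)| |(ξ₄:ℝ)| ≤ 0 :=
      le_trans hmin (by rw [min_le_iff]; left; rw [h]; simp)
    have hx4 : (ξ₄:ℝ) = 0 :=
      abs_eq_zero.mp (le_antisymm (le_trans h4m hm') (abs_nonneg _))
    exact hden (by rw [h, hx4]; ring)
  have hx1one : (1:ℝ) ≤ |(ξ₁:ℝ)| := by
    rw [← Int.cast_abs]; exact_mod_cast Int.one_le_abs hx1ne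
  have hN1 : (1:ℝ) ≤ max |(ξ₁:ℝ)| |(ξ₃:ℝ)| := le_trans hx1one (le_max_left _ _)
  have hmN : max |(ξ₂:ℝ)| |(ξ₄:ℝ)| ≤ (max |(ξ₁:ℝ)| |(ξ₃:ℝ)|) / 10 := by linarith
  exact core_est s hs0 hs (ξ₁:ℝ) (ξ₂:ℝ) (ξ₃:ℝ) (ξ₄:ℝ) _ _ hsumR hden rfl rfl hN1 hmN
end

section
/- Let 0 < s < 1/2 and suppose ξ₁+ξ₂+ξ₃+ξ₄ = 0 with |ξ₁| ∼ |ξ₂| ≥ max{|ξ₃|,|ξ₄|}, |ξ₁+ξ₄| ≥ c|ξ₁| and |ξ₃+ξ₄| ≤ c'|ξ₁| for suitable constants (i.e. |ξ₁+ξ₄| ≳ |ξ₁| ≫ |ξ₃+ξ₄|, with ξ₃+ξ₄ ≠ 0). Then | (ξ₁+ξ₂)⟨ξ₃⟩^{2s} + (ξ₃+ξ₄)⟨ξ₁⟩^{2s} + ξ₄(⟨ξ₂⟩^{2s}-⟨ξ₁⟩^{2s}) | / (|ξ₁+ξ₄|·|ξ₃+ξ₄|) ≤ C·⟨ξ₁⟩^{2s-1}.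 -/
open Real

lemma my_rpow_sub_rpow_le {s a b : ℝ} (hs0 : 0 < s) (hs1 : s ≤ 1) (ha : 1 ≤ a) (hab : a ≤ b) :
    b ^ s - a ^ s ≤ s * a ^ (s - 1) * (b - a) := by
  have ha0 : (0:ℝ) < a := lt_of_lt_of_le one_pos ha
  have hd0 : (0:ℝ) ≤ (b - a) / a := div_nonneg (by linarith) ha0.le
  have hx : (-1:ℝ) ≤ (b - a) / a := by linarith
  have hB : (1 + (b - a) / a) ^ s ≤ 1 + s * ((b - a) / a) :=
    rpow_one_add_le_one_add_mul_self hx hs0.le hs1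
  have hb' : b = a * (1 + (b - a) / a) := by field_simp; ring
  have h1 : b ^ s = a ^ s * (1 + (b - a) / a) ^ s := by
    rw [← Real.mul_rpow ha0.le (by linarith), ← hb']
  have h2 : a ^ s * (1 + (b - a) / a) ^ s ≤ a ^ s * (1 + s * ((b - a) / a)) :=
    mul_le_mul_of_nonneg_left hB (by positivity)
  have h3 : a ^ s * (1 + s * ((b - a) / a)) = a ^ s + s * (a ^ s / a) * (b - a) := by
    field_simp
  have h4 : a ^ s / a = a ^ (s - 1) := by
    rw [Real.rpow_sub ha0, Real.rpow_one]
  rw [h1]; rw [h4] at h3; linarith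

lemma my_abs_rpow_sub_rpow_le {s a b m : ℝ} (hs0 : 0 < s) (hs1 : s ≤ 1)
    (hm : 1 ≤ m) (hma : m ≤ a) (hmb : m ≤ b) :
    |b ^ s - a ^ s| ≤ s * m ^ (s - 1) * |b - a| := by
  have hm0 : (0:ℝ) < m := lt_of_lt_of_le one_pos hm
  rcases le_total a b with h | h
  · have h1 := my_rpow_sub_rpow_le hs0 hs1 (hm.trans hma) h
    have h2 : a ^ (s-1) ≤ m ^ (s-1) := Real.rpow_le_rpow_of_nonpos hm0 hma (by linarith)
    have h5 := mul_le_mul_of_nonneg_right (mul_le_mul_of_nonneg_left h2 hs0.le) (sub_nonneg.2 h)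
    rw [abs_of_nonneg (sub_nonneg.2 (Real.rpow_le_rpow (by linarith) h hs0.le)),
      abs_of_nonneg (by linarith)]
    linarith
  · have h1 := my_rpow_sub_rpow_le hs0 hs1 (hm.trans hmb) h
    have h2 : b ^ (s-1) ≤ m ^ (s-1) := Real.rpow_le_rpow_of_nonpos hm0 hmb (by linarith)
    have h5 := mul_le_mul_of_nonneg_right (mul_le_mul_of_nonneg_left h2 hs0.le) (sub_nonneg.2 h)
    rw [abs_sub_comm, abs_of_nonneg (sub_nonneg.2 (Real.rpow_le_rpow (by linarith) h hs0.le)),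
      abs_sub_comm b a, abs_of_nonneg (by linarith)]
    linarith

lemma int_eq_zero_of_abs_lt_one {n : ℤ} (h : |(n:ℝ)| < 1) : n = 0 := by
  have h1 : ((|n| : ℤ) : ℝ) < 1 := by rwa [Int.cast_abs]
  have h2 : |n| < 1 := by exact_mod_cast h1
  have h3 := abs_lt.mp h2
  omega

set_option maxHeartbeats 1000000 in
/-- Main part of case (ii) of the M₄ multiplier bound: on the hyperplane
ξ₁+ξ₂+ξ₃+ξ₄ = 0 with |ξ₁| ∼ |ξ₂| ≥ max{|ξ₃|,|ξ₄|}, ξ₃+ξ₄ ≠ 0,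
|ξ₁+ξ₄| ≳ |ξ₁| and |ξ₃+ξ₄| ≤ c'|ξ₁|, one has
|(ξ₁+ξ₂)⟨ξ₃⟩^{2s} + (ξ₃+ξ₄)⟨ξ₁⟩^{2s} + ξ₄(⟨ξ₂⟩^{2s}-⟨ξ₁⟩^{2s})|
  / (|ξ₁+ξ₄||ξ₃+ξ₄|) ≤ C⟨ξ₁⟩^{2s-1}, with ⟨ξ⟩^{2s} = (1+ξ²)^s. -/
theorem stmt_17 (s : ℝ) (hs0 : 0 < s) (hs : s < 1 / 2)
    (c K : ℝ) (hc : 0 < c) (hK : 1 ≤ K) :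
    ∃ c' C : ℝ, 0 < c' ∧ 0 < C ∧ ∀ ξ₁ ξ₂ ξ₃ ξ₄ : ℤ,
      ξ₁ + ξ₂ + ξ₃ + ξ₄ = 0 → ξ₃ + ξ₄ ≠ 0 →
      |(ξ₂ : ℝ)| ≤ K * |(ξ₁ : ℝ)| → |(ξ₁ : ℝ)| ≤ K * |(ξ₂ : ℝ)| →
      max |(ξ₃ : ℝ)| |(ξ₄ : ℝ)| ≤ |(ξ₁ : ℝ)| →
      c * |(ξ₁ : ℝ)| ≤ |(ξ₁ : ℝ) + ξ₄| →
      |(ξ₃ : ℝ) + ξ₄| ≤ c' * |(ξ₁ : ℝ)| →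
      |((ξ₁ : ℝ) + ξ₂) * (1 + (ξ₃ : ℝ) ^ 2) ^ s
          + ((ξ₃ : ℝ) + ξ₄) * (1 + (ξ₁ : ℝ) ^ 2) ^ s
          + (ξ₄ : ℝ) * ((1 + (ξ₂ : ℝ) ^ 2) ^ s - (1 + (ξ₁ : ℝ) ^ 2) ^ s)|
        / (|(ξ₁ : ℝ) + ξ₄| * |(ξ₃ : ℝ) + ξ₄|)
        ≤ C * Real.sqrt (1 + (ξ₁ : ℝ) ^ 2) ^ (2 * s - 1) := by
  refine ⟨1, (2 + K^2 * (c + 2)) / c, one_pos, by positivity, ?_⟩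
  intro ξ₁ ξ₂ ξ₃ ξ₄ hSS hq0 h21 h12 hmax hcp _
  -- integer-level facts, before abstracting
  have hsum : (ξ₁ : ℝ) + ξ₂ + ξ₃ + ξ₄ = 0 := by exact_mod_cast hSS
  have hq1 : (1:ℝ) ≤ |(ξ₃ : ℝ) + ξ₄| := by
    have h1 : (1:ℤ) ≤ |ξ₃ + ξ₄| := Int.one_le_abs hq0
    have h2 : (1:ℝ) ≤ ((|ξ₃ + ξ₄| : ℤ) : ℝ) := by exact_mod_cast h1
    rw [Int.cast_abs, Int.cast_add] at h2
    exact h2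
  have ha11 : (1:ℝ) ≤ |(ξ₁ : ℝ)| := by
    by_contra hcon
    push_neg at hcon
    have h3' : |(ξ₃ : ℝ)| ≤ |(ξ₁ : ℝ)| := le_trans (le_max_left _ _) hmax
    have h4' : |(ξ₄ : ℝ)| ≤ |(ξ₁ : ℝ)| := le_trans (le_max_right _ _) hmax
    have e3 : ξ₃ = 0 := int_eq_zero_of_abs_lt_one (by linarith)
    have e4 : ξ₄ = 0 := int_eq_zero_of_abs_lt_one (by linarith)
    exact hq0 (by simp [e3, e4])
  -- abstract all quantities
  set x1 : ℝ := (ξ₁ : ℝ) with hx1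
  set x2 : ℝ := (ξ₂ : ℝ) with hx2
  set x3 : ℝ := (ξ₃ : ℝ) with hx3
  set x4 : ℝ := (ξ₄ : ℝ) with hx4
  clear_value x1 x2 x3 x4
  clear hSS hq0 hx1 hx2 hx3 hx4
  set h : ℝ := 1 + x1 ^ 2 with hh_def
  set h2 : ℝ := 1 + x2 ^ 2 with hh2_def
  set h3 : ℝ := 1 + x3 ^ 2 with hh3_def
  set A1 : ℝ := h ^ s with hA1
  set A2 : ℝ := h2 ^ s with hA2
  set A3 : ℝ := h3 ^ s with hA3
  set p : ℝ := |x1 + x4| with hp_def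
  set q : ℝ := |x3 + x4| with hq_def
  set a1 : ℝ := |x1| with ha1_def
  set a4 : ℝ := |x4| with ha4_def
  clear_value h h2 h3 A1 A2 A3 p q a1 a4
  have hq0' : (0:ℝ) ≤ q := by linarith
  have hx1abs : (1:ℝ) ≤ |x1| := ha1_def ▸ ha11
  have hx1sq : (1:ℝ) ≤ x1 ^ 2 := by
    have h0 := mul_le_mul hx1abs hx1abs zero_le_one (abs_nonneg x1)
    have h1 := sq_abs x1
    nlinarith only [h0, h1]
  have hhpos : (0:ℝ) < h := by rw [hh_def]; linarith only [sq_nonneg x1]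
  have hp0 : 0 < p := lt_of_lt_of_le (mul_pos hc (lt_of_lt_of_le one_pos ha11)) hcp
  have hD : 0 < p * q := mul_pos hp0 (by linarith)
  set X' : ℝ := h ^ (s - 1/2) with hX'def
  clear_value X'
  have hX'0 : (0:ℝ) < X' := by rw [hX'def]; exact Real.rpow_pos_of_pos hhpos _
  have hX : Real.sqrt h ^ (2*s-1) = X' := by
    rw [hX'def, Real.sqrt_eq_rpow, ← Real.rpow_mul hhpos.le,
      show (1/2) * (2*s-1) = s - 1/2 by ring]
  -- numerator rewriting
  have hN : (x1 + x2) * A3 + (x3 + x4) * A1 + x4 * (A2 - A1)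
      = (x3 + x4) * (A1 - A3) + x4 * (A2 - A1) := by
    linear_combination A3 * hsum
  have T0 : |(x1 + x2) * A3 + (x3 + x4) * A1 + x4 * (A2 - A1)|
      ≤ q * |A1 - A3| + a4 * |A2 - A1| := by
    rw [hN]
    calc |(x3 + x4) * (A1 - A3) + x4 * (A2 - A1)|
        ≤ |(x3 + x4) * (A1 - A3)| + |x4 * (A2 - A1)| := abs_add_le _ _
      _ = q * |A1 - A3| + a4 * |A2 - A1| := by
          rw [abs_mul, abs_mul, hq_def, ha4_def]
  -- bound 1 : |A1 - A3| ≤ 2*a1*X'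
  have h3a1 : |x3| ≤ |x1| := ha1_def ▸ le_trans (le_max_left |x3| a4) hmax
  have hA3le : A3 ≤ A1 := by
    rw [hA1, hA3, hh3_def, hh_def]
    apply Real.rpow_le_rpow (by positivity) _ hs0.le
    linarith only [sq_abs x3, sq_abs x1, mul_self_le_mul_self (abs_nonneg x3) h3a1]
  have hA30 : 0 ≤ A3 := by
    rw [hA3]; exact Real.rpow_nonneg (by rw [hh3_def]; positivity) _
  have hsplit : A1 = h ^ ((1:ℝ)/2) * X' := by
    rw [hA1, hX'def, ← Real.rpow_add hhpos, show (1:ℝ)/2 + (s - 1/2) = s by ring]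
  have hhalf : h ^ ((1:ℝ)/2) ≤ 2 * a1 := by
    rw [← Real.sqrt_eq_rpow]
    calc Real.sqrt h ≤ Real.sqrt ((2*a1)^2) := by
          apply Real.sqrt_le_sqrt
          rw [hh_def, ha1_def]
          linarith only [sq_abs x1, hx1sq]
      _ = 2 * a1 := Real.sqrt_sq (by linarith)
  have S1 : |A1 - A3| ≤ (2 * a1) * X' := by
    rw [abs_of_nonneg (by linarith)]
    calc A1 - A3 ≤ A1 := by linarith
      _ = h ^ ((1:ℝ)/2) * X' := hsplit
      _ ≤ (2 * a1) * X' := mul_le_mul_of_nonneg_right hhalf hX'0.le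
  -- bound 2 : mean value / Bernoulli
  set m : ℝ := min h h2 with hm_def
  clear_value m
  have hh2pos : (0:ℝ) < h2 := by rw [hh2_def]; positivity
  have hm1 : (1:ℝ) ≤ m := by
    rw [hm_def]
    refine le_min ?_ ?_
    · rw [hh_def]; linarith only [sq_nonneg x1]
    · rw [hh2_def]; linarith only [sq_nonneg x2]
  have hK2 : (1:ℝ) ≤ K ^ 2 := by
    have h0 := mul_le_mul hK hK zero_le_one (by linarith only [hK])
    nlinarith only [h0]
  have hK20 : (0:ℝ) < K ^ 2 := by linarith
  have h12' : |x1| ≤ K * |x2| := ha1_def ▸ h12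
  have hdm : h / K ^ 2 ≤ m := by
    rw [hm_def]
    refine le_min (div_le_self hhpos.le hK2) ?_
    rw [div_le_iff₀ hK20, hh_def, hh2_def]
    have e1 : x1^2 = |x1| * |x1| := by rw [sq]; exact (abs_mul_abs_self x1).symm
    have e2 : (K * |x2|) * (K * |x2|) = K^2 * x2^2 := by
      rw [show (K * |x2|) * (K * |x2|) = (K * K) * (|x2| * |x2|) by ring, abs_mul_abs_self]; ring
    have s1 : x1^2 ≤ K^2 * x2^2 := by
      rw [e1, ← e2]; exact mul_self_le_mul_self (abs_nonneg x1) h12'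
    linarith only [s1, hK2]
  have hmK : m ^ (s - 1) ≤ K ^ 2 * h ^ (s - 1) := by
    have h0' : (0:ℝ) < h / K ^ 2 := div_pos hhpos hK20
    have step1 : m ^ (s-1) ≤ (h / K ^ 2) ^ (s-1) :=
      Real.rpow_le_rpow_of_nonpos h0' hdm (by linarith)
    have step2 : (h / K ^ 2) ^ (s-1) = h ^ (s-1) / (K ^ 2) ^ (s-1) :=
      Real.div_rpow hhpos.le (by positivity : (0:ℝ) ≤ K ^ 2) (s-1)
    have hk1 : (1:ℝ) ≤ (K ^ 2) ^ s := Real.one_le_rpow hK2 hs0.le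
    have hkmul : (K ^ 2) * (K ^ 2) ^ (s-1) = (K ^ 2) ^ s := by
      calc (K ^ 2) * (K ^ 2) ^ (s-1) = (K ^ 2) ^ ((1:ℝ) + (s-1)) := by
            rw [Real.rpow_add hK20, Real.rpow_one]
        _ = (K ^ 2) ^ s := by rw [show (1:ℝ) + (s-1) = s by ring]
    have hks0 : (0:ℝ) < (K ^ 2) ^ (s-1) := Real.rpow_pos_of_pos hK20 _
    have step3 : h ^ (s-1) / (K ^ 2) ^ (s-1) ≤ K ^ 2 * h ^ (s-1) := by
      rw [div_le_iff₀ hks0]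
      calc h ^ (s-1) = h ^ (s-1) * 1 := by ring
        _ ≤ h ^ (s-1) * (K ^ 2) ^ s :=
            mul_le_mul_of_nonneg_left hk1 (Real.rpow_nonneg hhpos.le _)
        _ = K ^ 2 * h ^ (s-1) * (K ^ 2) ^ (s-1) := by rw [← hkmul]; ring
    calc m ^ (s-1) ≤ (h / K ^ 2) ^ (s-1) := step1
      _ = h ^ (s-1) / (K ^ 2) ^ (s-1) := step2
      _ ≤ K ^ 2 * h ^ (s-1) := step3
  set w : ℝ := |x2 - x1| with hw_def
  clear_value w
  have hw0 : (0:ℝ) ≤ w := by rw [hw_def]; exact abs_nonneg _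
  have hdiff : |h2 - h| = w * q := by
    have e : h2 - h = (x2 - x1) * (-(x3 + x4)) := by
      rw [hh2_def, hh_def]; linear_combination (x2 - x1) * hsum
    rw [e, abs_mul, abs_neg, ← hw_def, ← hq_def]
  have B2 : |A2 - A1| ≤ s * (K ^ 2 * h ^ (s-1)) * (w * q) := by
    have hmva : m ≤ h := by rw [hm_def]; exact min_le_left _ _
    have hmvb : m ≤ h2 := by rw [hm_def]; exact min_le_right _ _
    have key := my_abs_rpow_sub_rpow_le hs0 (by linarith) hm1 hmva hmvb
    rw [hdiff, ← hA1, ← hA2] at key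
    calc |A2 - A1| ≤ s * m ^ (s-1) * (w * q) := key
      _ ≤ s * (K ^ 2 * h ^ (s-1)) * (w * q) := by
          exact mul_le_mul_of_nonneg_right (mul_le_mul_of_nonneg_left hmK hs0.le)
            (mul_nonneg hw0 hq0')
  -- arithmetic bounds
  have hwp : c * w ≤ (c + 2) * p := by
    have e : x2 - x1 = -(x1 + x4) + -(x1 + x3) := by linarith
    have hw1 : w ≤ p + (a1 + |x3|) := by
      calc w = |(-(x1 + x4)) + (-(x1 + x3))| := by rw [hw_def, e]
        _ ≤ |(-(x1 + x4))| + |(-(x1 + x3))| := abs_add_le _ _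
        _ = p + |x1 + x3| := by rw [abs_neg, abs_neg, ← hp_def]
        _ ≤ p + (a1 + |x3|) := by rw [ha1_def]; linarith [abs_add_le x1 x3]
    have hx3a : |x3| ≤ a1 := ha1_def ▸ h3a1
    linarith only [mul_le_mul_of_nonneg_left hw1 hc.le, mul_le_mul_of_nonneg_left hx3a hc.le, hcp, hc]
  have HB : a1 * h ^ (s-1) ≤ X' := by
    have ha1h : a1 ≤ h ^ ((1:ℝ)/2) := by
      rw [← Real.sqrt_eq_rpow]
      calc a1 = Real.sqrt (x1 ^ 2) := by rw [Real.sqrt_sq_eq_abs, ← ha1_def]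
        _ ≤ Real.sqrt h := Real.sqrt_le_sqrt (by rw [hh_def]; linarith only [])
    have hs10 : (0:ℝ) ≤ h ^ (s-1) := Real.rpow_nonneg hhpos.le _
    calc a1 * h ^ (s-1) ≤ h ^ ((1:ℝ)/2) * h ^ (s-1) := mul_le_mul_of_nonneg_right ha1h hs10
      _ = X' := by rw [hX'def, ← Real.rpow_add hhpos, show (1:ℝ)/2 + (s-1) = s - 1/2 by ring]
  -- combine: T1
  have T1 : c * (q * |A1 - A3|) ≤ 2 * (X' * (p * q)) := by
    have u1 : q * |A1 - A3| ≤ q * ((2 * a1) * X') := mul_le_mul_of_nonneg_left S1 hq0'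
    have u2 := mul_le_mul_of_nonneg_left u1 hc.le
    have u3 : (c * a1) * (q * X') ≤ p * (q * X') :=
      mul_le_mul_of_nonneg_right hcp (mul_nonneg hq0' hX'0.le)
    linarith only [u2, u3]
  -- combine: T2
  have T2 : c * (a4 * |A2 - A1|) ≤ (K ^ 2 * (c + 2)) * (X' * (p * q)) := by
    have ha4 : a4 ≤ a1 := le_trans (le_max_right |x3| a4) hmax
    have ha10 : (0:ℝ) ≤ a1 := by linarith
    have u1 : a4 * |A2 - A1| ≤ a1 * (s * (K ^ 2 * h ^ (s-1)) * (w * q)) := by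
      calc a4 * |A2 - A1| ≤ a1 * |A2 - A1| :=
            mul_le_mul_of_nonneg_right ha4 (abs_nonneg _)
        _ ≤ a1 * (s * (K ^ 2 * h ^ (s-1)) * (w * q)) :=
            mul_le_mul_of_nonneg_left B2 ha10
    have u2 := mul_le_mul_of_nonneg_left u1 hc.le
    have u3 : (a1 * h ^ (s-1)) * (c * w) ≤ X' * ((c + 2) * p) :=
      mul_le_mul HB hwp (mul_nonneg hc.le hw0) hX'0.le
    have u4 := mul_le_mul_of_nonneg_left u3
      (mul_nonneg hs0.le (mul_nonneg hK20.le hq0') : (0:ℝ) ≤ s * (K ^ 2 * q))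
    have u5 : s * (K ^ 2 * q) * (X' * ((c + 2) * p))
        ≤ 1 * (K ^ 2 * q) * (X' * ((c + 2) * p)) := by
      apply mul_le_mul_of_nonneg_right _
        (mul_nonneg hX'0.le (mul_nonneg (by linarith) hp0.le))
      exact mul_le_mul_of_nonneg_right (by linarith) (mul_nonneg hK20.le hq0')
    linarith only [u2, u4, u5]
  -- final assembly
  rw [div_le_iff₀ hD, hX]
  have hT0c := mul_le_mul_of_nonneg_left T0 hc.le
  rw [show (2 + K ^ 2 * (c + 2)) / c * X' * (p * q)
      = ((2 + K ^ 2 * (c + 2)) * (X' * (p * q))) / c by ring, le_div_iff₀ hc]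
  linarith only [hT0c, T1, T2]
end
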